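/- If the matrix [Ψ_1(X̂); Ψ_L(Û); Ψ_L(Ω̂)] has full row rank and the L-step observability matrix 𝒪_L of (A, C) has full column rank n_x (which holds whenever L ≥ ℓ_Σ, the observability index), then rank [Ψ_L(Û); Ψ_L(Ω̂); Ψ_L(Ŷ)] = (n_u + 1)L + n_x. -/

import Mathlib

open Matrix Complex

/-- e^{j ω_k} with ω_k = πk/M. -/
noncomputable def specExp (M k : ℕ) : ℂ := Complex.exp (Complex.I * (Real.pi * k / M))

/-- Ψ_L(S_{[0,M-1]}) = [F_L(S_{[0,M-1]}), F_L^*(S_{[1,M-1]})], with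
    F_L(S_{[m,n]}) = [W_L(e^{jω_m}) ⊗ S_m, ..., W_L(e^{jω_n}) ⊗ S_n],
    W_L(z) = (1, z, ..., z^{L-1})ᵀ; rows indexed by Fin L × α. -/
noncomputable def PsiMat (L M : ℕ) {α : Type} (S : Fin M → α → ℂ) :
    Matrix (Fin L × α) (Fin M ⊕ Fin (M - 1)) ℂ :=
  Matrix.of fun p => Sum.elim
    (fun k : Fin M => specExp M k ^ (p.1 : ℕ) * S k p.2)
    (fun k : Fin (M - 1) => (starRingEnd ℂ)
      (specExp M (k + 1) ^ (p.1 : ℕ) * S ⟨k.1 + 1, by have := k.isLt; omega⟩ p.2))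

/-- L-step observability matrix 𝒪_L = [C; CA; ...; CA^{L-1}]. -/
noncomputable def obsMat (nx ny L : ℕ) (A : Matrix (Fin nx) (Fin nx) ℝ)
    (C : Matrix (Fin ny) (Fin nx) ℝ) : Matrix (Fin L × Fin ny) (Fin nx) ℝ :=
  Matrix.of fun p j => (C * A ^ (p.1 : ℕ)) p.2 j


private lemma mapc_mul {m n o : Type*} [Fintype n] (M : Matrix m n ℝ) (N : Matrix n o ℝ) :
    (M * N).map Complex.ofReal = M.map Complex.ofReal * N.map Complex.ofReal := by
  have : (Complex.ofReal : ℝ → ℂ) = ⇑Complex.ofRealHom := rfl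
  rw [this, Matrix.map_mul]

private lemma mapc_pow {n : Type*} [Fintype n] [DecidableEq n] (M : Matrix n n ℝ) (i : ℕ) :
    (M ^ i).map Complex.ofReal = (M.map Complex.ofReal) ^ i := by
  induction i with
  | zero => ext a b; by_cases h : a = b <;> simp [Matrix.one_apply, h]
  | succ k ih => rw [pow_succ, pow_succ, mapc_mul, ih]

private lemma state_evol {nx nu : ℕ} {A : Matrix (Fin nx) (Fin nx) ℝ}
    {Bt : Matrix (Fin nx) (Fin nu ⊕ Unit) ℝ} {x : Fin nx → ℂ} {u : Fin nu ⊕ Unit → ℂ} {zz : ℂ}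
    (h : zz • x = (A.map Complex.ofReal).mulVec x + (Bt.map Complex.ofReal).mulVec u) (i : ℕ) :
    zz ^ i • x = ((A ^ i).map Complex.ofReal).mulVec x
      + ∑ j ∈ Finset.range i,
          zz ^ j • (((A ^ (i - 1 - j) * Bt).map Complex.ofReal).mulVec u) := by
  induction i with
  | zero => simp
  | succ n ih =>
    have h1 : zz ^ (n+1) • x = zz ^ n • (zz • x) := by rw [smul_smul, ← pow_succ]
    rw [h1, h, smul_add]
    have h2 : zz ^ n • (A.map Complex.ofReal).mulVec x
        = (A.map Complex.ofReal).mulVec (zz ^ n • x) := (Matrix.mulVec_smul _ _ _).symm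
    rw [h2, ih, Matrix.mulVec_add, Matrix.mulVec_mulVec, ← mapc_mul, ← pow_succ']
    have h3 : (A.map Complex.ofReal).mulVec
        (∑ j ∈ Finset.range n, zz ^ j • (((A ^ (n - 1 - j) * Bt).map Complex.ofReal).mulVec u))
        = ∑ j ∈ Finset.range n, zz ^ j • (((A ^ (n - j) * Bt).map Complex.ofReal).mulVec u) := by
      rw [show (A.map Complex.ofReal).mulVec
          (∑ j ∈ Finset.range n, zz ^ j • (((A ^ (n - 1 - j) * Bt).map Complex.ofReal).mulVec u))
          = (A.map Complex.ofReal).mulVecLin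
          (∑ j ∈ Finset.range n, zz ^ j • (((A ^ (n - 1 - j) * Bt).map Complex.ofReal).mulVec u))
          from rfl, map_sum]
      refine Finset.sum_congr rfl fun j hj => ?_
      rw [LinearMap.map_smul, Matrix.mulVecLin_apply, Matrix.mulVec_mulVec, ← mapc_mul,
        ← Matrix.mul_assoc, ← pow_succ']
      have : n - 1 - j + 1 = n - j := by have := Finset.mem_range.mp hj; omega
      rw [this]
    rw [h3, Finset.sum_range_succ]
    have h4 : ∀ j, (n + 1) - 1 - j = n - j := fun j => by omega
    simp only [h4, Nat.sub_self, pow_zero, Matrix.one_mul]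
    abel

private noncomputable def toepR {nx nu ny : ℕ} (A : Matrix (Fin nx) (Fin nx) ℝ)
    (Bt : Matrix (Fin nx) (Fin nu ⊕ Unit) ℝ) (C : Matrix (Fin ny) (Fin nx) ℝ)
    (Dt : Matrix (Fin ny) (Fin nu ⊕ Unit) ℝ) (i j : ℕ) : Matrix (Fin ny) (Fin nu ⊕ Unit) ℝ :=
  if j = i then Dt else if j < i then C * A ^ (i - 1 - j) * Bt else 0

private lemma out_evol {nx nu ny : ℕ} {A : Matrix (Fin nx) (Fin nx) ℝ}
    {Bt : Matrix (Fin nx) (Fin nu ⊕ Unit) ℝ} {C : Matrix (Fin ny) (Fin nx) ℝ}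
    {Dt : Matrix (Fin ny) (Fin nu ⊕ Unit) ℝ}
    {x : Fin nx → ℂ} {y : Fin ny → ℂ} {u : Fin nu ⊕ Unit → ℂ} {zz : ℂ}
    (h1 : zz • x = (A.map Complex.ofReal).mulVec x + (Bt.map Complex.ofReal).mulVec u)
    (h2 : y = (C.map Complex.ofReal).mulVec x + (Dt.map Complex.ofReal).mulVec u)
    {L : ℕ} (i : Fin L) :
    zz ^ (i : ℕ) • y = ((C * A ^ (i : ℕ)).map Complex.ofReal).mulVec x
      + ∑ j : Fin L,
          zz ^ (j : ℕ) • (((toepR A Bt C Dt i j).map Complex.ofReal).mulVec u) := by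
  have hL : (i : ℕ) + 1 ≤ L := i.isLt
  have hsum : ∑ j : Fin L, zz ^ (j:ℕ) • (((toepR A Bt C Dt i j).map Complex.ofReal).mulVec u)
      = ∑ j ∈ Finset.range ((i:ℕ)+1),
          zz ^ j • (((toepR A Bt C Dt i j).map Complex.ofReal).mulVec u) := by
    rw [Fin.sum_univ_eq_sum_range
      (fun j => zz ^ j • (((toepR A Bt C Dt i j).map Complex.ofReal).mulVec u)) L]
    refine (Finset.sum_subset (Finset.range_subset_range.mpr hL) fun j hj hj' => ?_).symm
    have e1 : j ≠ (i:ℕ) := by simp only [Finset.mem_range] at hj hj'; omega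
    have e2 : ¬ j < (i:ℕ) := by simp only [Finset.mem_range] at hj hj'; omega
    simp [toepR, e1, e2]
  rw [hsum, Finset.sum_range_succ]
  have hii : toepR A Bt C Dt (i:ℕ) (i:ℕ) = Dt := if_pos rfl
  have hlow : ∑ j ∈ Finset.range (i:ℕ),
        zz ^ j • (((toepR A Bt C Dt i j).map Complex.ofReal).mulVec u)
      = ∑ j ∈ Finset.range (i:ℕ),
        zz ^ j • (((C * A ^ ((i:ℕ)-1-j) * Bt).map Complex.ofReal).mulVec u) := by
    refine Finset.sum_congr rfl fun j hj => ?_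
    have e1 : j < (i:ℕ) := Finset.mem_range.mp hj
    have e2 : j ≠ (i:ℕ) := by omega
    simp [toepR, e1, e2]
  rw [hii, hlow, h2, smul_add]
  have h3 : zz ^ (i:ℕ) • (C.map Complex.ofReal).mulVec x
      = (C.map Complex.ofReal).mulVec (zz ^ (i:ℕ) • x) := (Matrix.mulVec_smul _ _ _).symm
  rw [h3, state_evol h1 (i:ℕ), Matrix.mulVec_add, Matrix.mulVec_mulVec, ← mapc_mul]
  have h5 : (C.map Complex.ofReal).mulVec
      (∑ j ∈ Finset.range (i:ℕ),
        zz ^ j • (((A ^ ((i:ℕ) - 1 - j) * Bt).map Complex.ofReal).mulVec u))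
      = ∑ j ∈ Finset.range (i:ℕ),
        zz ^ j • (((C * A ^ ((i:ℕ)-1-j) * Bt).map Complex.ofReal).mulVec u) := by
    rw [show (C.map Complex.ofReal).mulVec
        (∑ j ∈ Finset.range (i:ℕ),
          zz ^ j • (((A ^ ((i:ℕ) - 1 - j) * Bt).map Complex.ofReal).mulVec u))
        = (C.map Complex.ofReal).mulVecLin
        (∑ j ∈ Finset.range (i:ℕ),
          zz ^ j • (((A ^ ((i:ℕ) - 1 - j) * Bt).map Complex.ofReal).mulVec u)) from rfl, map_sum]
    refine Finset.sum_congr rfl fun j hj => ?_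
    rw [LinearMap.map_smul, Matrix.mulVecLin_apply, Matrix.mulVec_mulVec, ← mapc_mul,
      ← Matrix.mul_assoc]
  rw [h5]
  abel

private noncomputable def P3x (nx ny L : ℕ) (A : Matrix (Fin nx) (Fin nx) ℝ)
    (C : Matrix (Fin ny) (Fin nx) ℝ) : Matrix (Fin L × Fin ny) (Fin 1 × Fin nx) ℂ :=
  Matrix.of fun p q => Complex.ofReal ((C * A ^ (p.1 : ℕ)) p.2 q.2)

private noncomputable def P3u (nx nu ny L : ℕ) (A : Matrix (Fin nx) (Fin nx) ℝ)
    (Bt : Matrix (Fin nx) (Fin nu ⊕ Unit) ℝ) (C : Matrix (Fin ny) (Fin nx) ℝ)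
    (Dt : Matrix (Fin ny) (Fin nu ⊕ Unit) ℝ) : Matrix (Fin L × Fin ny) (Fin L × Fin nu) ℂ :=
  Matrix.of fun p q => Complex.ofReal (toepR A Bt C Dt p.1 q.1 p.2 (Sum.inl q.2))

private noncomputable def P3w (nx nu ny L : ℕ) (A : Matrix (Fin nx) (Fin nx) ℝ)
    (Bt : Matrix (Fin nx) (Fin nu ⊕ Unit) ℝ) (C : Matrix (Fin ny) (Fin nx) ℝ)
    (Dt : Matrix (Fin ny) (Fin nu ⊕ Unit) ℝ) : Matrix (Fin L × Fin ny) (Fin L × Unit) ℂ :=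
  Matrix.of fun p q => Complex.ofReal (toepR A Bt C Dt p.1 q.1 p.2 (Sum.inr ()))

private lemma entry_eq {M nx nu ny L : ℕ}
    {A : Matrix (Fin nx) (Fin nx) ℝ} {Bt : Matrix (Fin nx) (Fin nu ⊕ Unit) ℝ}
    {C : Matrix (Fin ny) (Fin nx) ℝ} {Dt : Matrix (Fin ny) (Fin nu ⊕ Unit) ℝ}
    {U : Fin M → Fin nu → ℂ} {Ω : Fin M → ℂ} {X : Fin M → Fin nx → ℂ} {Y : Fin M → Fin ny → ℂ}
    (hss : ∀ k : Fin M, specExp M k • X k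
          = (A.map Complex.ofReal).mulVec (X k)
            + (Bt.map Complex.ofReal).mulVec (Sum.elim (U k) (fun _ => Ω k)) ∧
        Y k = (C.map Complex.ofReal).mulVec (X k)
            + (Dt.map Complex.ofReal).mulVec (Sum.elim (U k) (fun _ => Ω k)))
    (k : Fin M) (i : Fin L) (p : Fin ny) :
    specExp M k ^ (i : ℕ) * Y k p
      = (∑ c : Fin 1 × Fin nx, P3x nx ny L A C (i, p) c * (specExp M k ^ ((c.1 : ℕ)) * X k c.2))
        + ((∑ c : Fin L × Fin nu,
              P3u nx nu ny L A Bt C Dt (i, p) c * (specExp M k ^ ((c.1 : ℕ)) * U k c.2))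
          + (∑ c : Fin L × Unit,
              P3w nx nu ny L A Bt C Dt (i, p) c * (specExp M k ^ ((c.1 : ℕ)) * Ω k))) := by
  have h := congrFun (out_evol (hss k).1 (hss k).2 i) p
  simp only [Pi.add_apply, Pi.smul_apply, smul_eq_mul, Finset.sum_apply] at h
  rw [h]
  congr 1
  · rw [Fintype.sum_prod_type]
    simp only [Fin.sum_univ_one, Fin.val_zero, pow_zero, one_mul, Matrix.mulVec, dotProduct,
      Matrix.map_apply, P3x, Matrix.of_apply]
  · simp only [Matrix.mulVec, dotProduct, Matrix.map_apply, Fintype.sum_sum_type,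
      Sum.elim_inl, Sum.elim_inr, P3u, P3w, Matrix.of_apply]
    rw [Fintype.sum_prod_type, Fintype.sum_prod_type, ← Finset.sum_add_distrib]
    refine Finset.sum_congr rfl fun j _ => ?_
    rw [mul_add, Finset.mul_sum, Finset.mul_sum]
    congr 1
    · exact Finset.sum_congr rfl fun q _ => by ring
    · simp only [Finset.univ_unique, Finset.sum_singleton]
      ring



private lemma conj_P3x {nx ny L : ℕ} (A : Matrix (Fin nx) (Fin nx) ℝ)
    (C : Matrix (Fin ny) (Fin nx) ℝ) (e : Fin L × Fin ny) (c : Fin 1 × Fin nx) :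
    (starRingEnd ℂ) (P3x nx ny L A C e c) = P3x nx ny L A C e c := by
  simp [P3x, Complex.conj_ofReal]

private lemma conj_P3u {nx nu ny L : ℕ} (A : Matrix (Fin nx) (Fin nx) ℝ)
    (Bt : Matrix (Fin nx) (Fin nu ⊕ Unit) ℝ) (C : Matrix (Fin ny) (Fin nx) ℝ)
    (Dt : Matrix (Fin ny) (Fin nu ⊕ Unit) ℝ) (e : Fin L × Fin ny) (c : Fin L × Fin nu) :
    (starRingEnd ℂ) (P3u nx nu ny L A Bt C Dt e c) = P3u nx nu ny L A Bt C Dt e c := by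
  simp [P3u, Complex.conj_ofReal]

private lemma conj_P3w {nx nu ny L : ℕ} (A : Matrix (Fin nx) (Fin nx) ℝ)
    (Bt : Matrix (Fin nx) (Fin nu ⊕ Unit) ℝ) (C : Matrix (Fin ny) (Fin nx) ℝ)
    (Dt : Matrix (Fin ny) (Fin nu ⊕ Unit) ℝ) (e : Fin L × Fin ny) (c : Fin L × Unit) :
    (starRingEnd ℂ) (P3w nx nu ny L A Bt C Dt e c) = P3w nx nu ny L A Bt C Dt e c := by
  simp [P3w, Complex.conj_ofReal]

private lemma fac {M nx nu ny L : ℕ}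
    {A : Matrix (Fin nx) (Fin nx) ℝ} {Bt : Matrix (Fin nx) (Fin nu ⊕ Unit) ℝ}
    {C : Matrix (Fin ny) (Fin nx) ℝ} {Dt : Matrix (Fin ny) (Fin nu ⊕ Unit) ℝ}
    {U : Fin M → Fin nu → ℂ} {Ω : Fin M → ℂ} {X : Fin M → Fin nx → ℂ} {Y : Fin M → Fin ny → ℂ}
    (hss : ∀ k : Fin M, specExp M k • X k
          = (A.map Complex.ofReal).mulVec (X k)
            + (Bt.map Complex.ofReal).mulVec (Sum.elim (U k) (fun _ => Ω k)) ∧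
        Y k = (C.map Complex.ofReal).mulVec (X k)
            + (Dt.map Complex.ofReal).mulVec (Sum.elim (U k) (fun _ => Ω k))) :
    Matrix.fromRows (PsiMat L M U)
        (Matrix.fromRows (PsiMat L M (fun k (_ : Unit) => Ω k)) (PsiMat L M Y))
      = (Matrix.fromRows
          (Matrix.fromCols (0 : Matrix (Fin L × Fin nu) (Fin 1 × Fin nx) ℂ)
            (Matrix.fromCols (1 : Matrix (Fin L × Fin nu) (Fin L × Fin nu) ℂ)
              (0 : Matrix (Fin L × Fin nu) (Fin L × Unit) ℂ)))
          (Matrix.fromRows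
            (Matrix.fromCols (0 : Matrix (Fin L × Unit) (Fin 1 × Fin nx) ℂ)
              (Matrix.fromCols (0 : Matrix (Fin L × Unit) (Fin L × Fin nu) ℂ)
                (1 : Matrix (Fin L × Unit) (Fin L × Unit) ℂ)))
            (Matrix.fromCols (P3x nx ny L A C)
              (Matrix.fromCols (P3u nx nu ny L A Bt C Dt) (P3w nx nu ny L A Bt C Dt)))))
        * (Matrix.fromRows (PsiMat 1 M X)
            (Matrix.fromRows (PsiMat L M U) (PsiMat L M (fun k (_ : Unit) => Ω k)))) := by
  set Q := Matrix.fromRows (PsiMat 1 M X)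
      (Matrix.fromRows (PsiMat L M U) (PsiMat L M (fun k (_ : Unit) => Ω k))) with hQdef
  have h1 : Matrix.fromCols (0 : Matrix (Fin L × Fin nu) (Fin 1 × Fin nx) ℂ)
      (Matrix.fromCols (1 : Matrix (Fin L × Fin nu) (Fin L × Fin nu) ℂ)
        (0 : Matrix (Fin L × Fin nu) (Fin L × Unit) ℂ)) * Q = PsiMat L M U := by
    rw [hQdef, Matrix.fromCols_mul_fromRows, Matrix.fromCols_mul_fromRows, Matrix.zero_mul,
      Matrix.one_mul, Matrix.zero_mul, zero_add, add_zero]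
  have h2 : Matrix.fromCols (0 : Matrix (Fin L × Unit) (Fin 1 × Fin nx) ℂ)
      (Matrix.fromCols (0 : Matrix (Fin L × Unit) (Fin L × Fin nu) ℂ)
        (1 : Matrix (Fin L × Unit) (Fin L × Unit) ℂ)) * Q
      = PsiMat L M (fun k (_ : Unit) => Ω k) := by
    rw [hQdef, Matrix.fromCols_mul_fromRows, Matrix.fromCols_mul_fromRows, Matrix.zero_mul,
      Matrix.one_mul, Matrix.zero_mul, zero_add, zero_add]
  have h3 : Matrix.fromCols (P3x nx ny L A C)
      (Matrix.fromCols (P3u nx nu ny L A Bt C Dt) (P3w nx nu ny L A Bt C Dt)) * Q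
      = PsiMat L M Y := by
    rw [hQdef, Matrix.fromCols_mul_fromRows, Matrix.fromCols_mul_fromRows]
    ext ⟨i, p⟩ col
    cases col with
    | inl k =>
      simp only [Matrix.add_apply, Matrix.mul_apply, PsiMat, Matrix.of_apply, Sum.elim_inl]
      exact (entry_eq hss k i p).symm
    | inr k' =>
      have hlt : (k' : ℕ) + 1 < M := by have := k'.isLt; omega
      have hc := congrArg (starRingEnd ℂ) (entry_eq hss ⟨(k' : ℕ) + 1, hlt⟩ i p)
      rw [map_add, map_add, map_sum, map_sum, map_sum] at hc
      simp only [_root_.map_mul, conj_P3x, conj_P3u, conj_P3w] at hc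
      simp only [Matrix.add_apply, Matrix.mul_apply, PsiMat, Matrix.of_apply, Sum.elim_inr]
      simp only [_root_.map_mul]
      exact hc.symm
  rw [Matrix.fromRows_mul, Matrix.fromRows_mul, h1, h2, h3]

/-- if [Ψ₁(X̂); Ψ_L(Û); Ψ_L(Ω̂)] has full row rank and 𝒪_L has full column
    rank n_x, then rank [Ψ_L(Û); Ψ_L(Ω̂); Ψ_L(Ŷ)] = (n_u + 1)L + n_x. -/
theorem rank_after_factorization (M nx nu ny L : ℕ)
    (A : Matrix (Fin nx) (Fin nx) ℝ) (Bt : Matrix (Fin nx) (Fin nu ⊕ Unit) ℝ)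
    (C : Matrix (Fin ny) (Fin nx) ℝ) (Dt : Matrix (Fin ny) (Fin nu ⊕ Unit) ℝ)
    (U : Fin M → Fin nu → ℂ) (Ω : Fin M → ℂ)
    (X : Fin M → Fin nx → ℂ) (Y : Fin M → Fin ny → ℂ)
    (hss : ∀ k : Fin M, specExp M k • X k
          = (A.map Complex.ofReal).mulVec (X k)
            + (Bt.map Complex.ofReal).mulVec (Sum.elim (U k) (fun _ => Ω k)) ∧
        Y k = (C.map Complex.ofReal).mulVec (X k)
            + (Dt.map Complex.ofReal).mulVec (Sum.elim (U k) (fun _ => Ω k)))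
    (hQ : (Matrix.fromRows (PsiMat 1 M X)
            (Matrix.fromRows (PsiMat L M U) (PsiMat L M (fun k (_ : Unit) => Ω k)))).rank
        = Fintype.card ((Fin 1 × Fin nx) ⊕ ((Fin L × Fin nu) ⊕ (Fin L × Unit))))
    (hO : (obsMat nx ny L A C).rank = nx) :
    (Matrix.fromRows (PsiMat L M U)
        (Matrix.fromRows (PsiMat L M (fun k (_ : Unit) => Ω k)) (PsiMat L M Y))).rank
      = (nu + 1) * L + nx := by
  classical
  rw [fac hss]
  set Q := Matrix.fromRows (PsiMat 1 M X)
      (Matrix.fromRows (PsiMat L M U) (PsiMat L M (fun k (_ : Unit) => Ω k))) with hQdef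
  set P := Matrix.fromRows
      (Matrix.fromCols (0 : Matrix (Fin L × Fin nu) (Fin 1 × Fin nx) ℂ)
        (Matrix.fromCols (1 : Matrix (Fin L × Fin nu) (Fin L × Fin nu) ℂ)
          (0 : Matrix (Fin L × Fin nu) (Fin L × Unit) ℂ)))
      (Matrix.fromRows
        (Matrix.fromCols (0 : Matrix (Fin L × Unit) (Fin 1 × Fin nx) ℂ)
          (Matrix.fromCols (0 : Matrix (Fin L × Unit) (Fin L × Fin nu) ℂ)
            (1 : Matrix (Fin L × Unit) (Fin L × Unit) ℂ)))
        (Matrix.fromCols (P3x nx ny L A C)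
          (Matrix.fromCols (P3u nx nu ny L A Bt C Dt) (P3w nx nu ny L A Bt C Dt)))) with hPdef
  have hQtop : LinearMap.range Q.mulVecLin = ⊤ := by
    apply Submodule.eq_top_of_finrank_eq
    exact hQ.trans (Module.finrank_pi ℂ).symm
  have hrank : (P * Q).rank = P.rank := by
    rw [Matrix.rank, Matrix.rank, Matrix.mulVecLin_mul,
      LinearMap.range_comp_of_range_eq_top _ hQtop]
  -- observability matrix is injective over ℝ
  have hOinjR : Function.Injective (obsMat nx ny L A C).mulVecLin := by
    rw [← LinearMap.ker_eq_bot]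
    have hrn := LinearMap.finrank_range_add_finrank_ker (obsMat nx ny L A C).mulVecLin
    have h1 : Module.finrank ℝ (LinearMap.range (obsMat nx ny L A C).mulVecLin) = nx := hO
    rw [h1, Module.finrank_fin_fun] at hrn
    have h2 : Module.finrank ℝ (LinearMap.ker (obsMat nx ny L A C).mulVecLin) = 0 := by omega
    exact Submodule.finrank_eq_zero.mp h2
  -- and over ℂ
  have hOinjC : ∀ w : Fin nx → ℂ,
      ((obsMat nx ny L A C).map Complex.ofReal).mulVec w = 0 → w = 0 := by
    intro w hw
    have hre : (obsMat nx ny L A C).mulVec (fun x => (w x).re) = 0 := by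
      funext r
      have h2 := congrArg Complex.re (congrFun hw r)
      simpa [Matrix.mulVec, dotProduct, Matrix.map_apply, Complex.re_sum,
        Complex.re_ofReal_mul] using h2
    have him : (obsMat nx ny L A C).mulVec (fun x => (w x).im) = 0 := by
      funext r
      have h2 := congrArg Complex.im (congrFun hw r)
      simpa [Matrix.mulVec, dotProduct, Matrix.map_apply, Complex.im_sum,
        Complex.im_ofReal_mul] using h2
    have hre0 : (fun x => (w x).re) = 0 := by
      apply hOinjR
      simpa [Matrix.mulVecLin_apply] using hre
    have him0 : (fun x => (w x).im) = 0 := by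
      apply hOinjR
      simpa [Matrix.mulVecLin_apply] using him
    funext x
    exact Complex.ext (congrFun hre0 x) (congrFun him0 x)
  -- P is injective
  have hPinj : Function.Injective P.mulVecLin := by
    rw [← LinearMap.ker_eq_bot, LinearMap.ker_eq_bot']
    intro v hv
    rw [Matrix.mulVecLin_apply] at hv
    have hvrep : v = Sum.elim (fun c => v (Sum.inl c))
        (Sum.elim (fun c => v (Sum.inr (Sum.inl c))) (fun c => v (Sum.inr (Sum.inr c)))) := by
      funext c; rcases c with c | c | c <;> rfl
    rw [hPdef, hvrep] at hv
    simp only [Matrix.fromRows_mulVec, Matrix.fromCols_mulVec_sumElim, Matrix.zero_mulVec,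
      Matrix.one_mulVec, zero_add, add_zero] at hv
    have hv2 : (fun c => v (Sum.inr (Sum.inl c))) = 0 := by
      funext c; simpa using congrFun hv (Sum.inl c)
    have hv3 : (fun c => v (Sum.inr (Sum.inr c))) = 0 := by
      funext c; simpa using congrFun hv (Sum.inr (Sum.inl c))
    have hv1 : P3x nx ny L A C *ᵥ (fun c => v (Sum.inl c)) = 0 := by
      have h4 : P3x nx ny L A C *ᵥ (fun c => v (Sum.inl c))
          + (P3u nx nu ny L A Bt C Dt *ᵥ (fun c => v (Sum.inr (Sum.inl c)))
            + P3w nx nu ny L A Bt C Dt *ᵥ (fun c => v (Sum.inr (Sum.inr c)))) = 0 := by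
        funext r; simpa using congrFun hv (Sum.inr (Sum.inr r))
      rw [hv2, hv3, Matrix.mulVec_zero, Matrix.mulVec_zero, add_zero, add_zero] at h4
      exact h4
    have hobs : ((obsMat nx ny L A C).map Complex.ofReal).mulVec
        (fun x => v (Sum.inl (0, x))) = 0 := by
      funext r
      have h5 := congrFun hv1 r
      simpa [Matrix.mulVec, dotProduct, Matrix.map_apply, obsMat, P3x,
        Fintype.sum_prod_type, Fin.sum_univ_one] using h5
    have hw0 := hOinjC _ hobs
    funext c
    rcases c with c | c | c
    · have : c = (0, c.2) := by
        obtain ⟨c1, c2⟩ := c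
        simp [Subsingleton.elim c1 0]
      rw [this]
      exact congrFun hw0 c.2
    · exact congrFun hv2 c
    · exact congrFun hv3 c
  rw [hrank, Matrix.rank, LinearMap.finrank_range_of_inj hPinj, Module.finrank_pi]
  simp only [Fintype.card_sum, Fintype.card_prod, Fintype.card_fin, Fintype.card_unit]
  ring
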